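/- Let A ≨ B be finite groups such that every non-trivial element of B has a non-trivial power lying in A, and let X be a set. Then every discrete subgroup of the topological group B^{X,A} is finite, where B^{X,A} carries the group topology for which the compact subgroup A^X (with the product topology) is open. -/

import Mathlib

/-- Let `A ≨ B` be finite groups such that every non-trivial element of
`B` has a non-trivial power lying in `A`, and let `X` be an infinite set. Equip the
group `S = B^{X,A}` (functions `X → B` lying in `A` almost everywhere) with the group
topology for which the compact subgroup `A^X` (product topology on `X → A`, `A`
discrete) is open, i.e. such that the natural inclusion `j : (X → A) → S` is an open
embedding. Then every discrete subgroup of `S` is finite. -/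
theorem discrete_subgroups_finite {B : Type*} [Group B] [Finite B]
    (A : Subgroup B) (hA : A ≠ ⊤)
    (hpow : ∀ b : B, b ≠ 1 → ∃ n : ℕ, 1 ≤ n ∧ b ^ n ≠ 1 ∧ b ^ n ∈ A)
    (X : Type*) [Infinite X]
    (S : Subgroup (X → B)) (hS : ∀ f : X → B, f ∈ S ↔ {x : X | f x ∉ A}.Finite)
    [TopologicalSpace S] [IsTopologicalGroup S]
    [TopologicalSpace A] [DiscreteTopology A]
    (j : (X → A) → S) (hj : ∀ (f : X → A) (x : X), ((j f : X → B)) x = f x)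
    (hopen : Topology.IsOpenEmbedding j) :
    ∀ Γ : Subgroup S, DiscreteTopology Γ → (Γ : Set S).Finite := by
  intro Γ hΓ
  -- Step 1: an open set `U ⊆ S` with `U ∩ Γ = {1}`
  obtain ⟨U, hUopen, hU⟩ := isOpen_induced_iff.mp (isOpen_discrete ({1} : Set Γ))
  have hU1 : (1 : S) ∈ U := by
    have h1 : (1 : Γ) ∈ Subtype.val ⁻¹' U := by rw [hU]; exact Set.mem_singleton _
    simpa using h1
  have hUΓ : ∀ s : S, s ∈ Γ → s ∈ U → s = 1 := by
    intro s hs hsU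
    have : (⟨s, hs⟩ : Γ) ∈ Subtype.val ⁻¹' U := hsU
    rw [hU] at this
    exact congrArg Subtype.val this
  -- Step 2: `j 1 = 1`, so `j ⁻¹' U` is an open neighborhood of `1` in `X → A`
  have hj1 : j 1 = 1 := by
    apply Subtype.ext; funext x
    simpa using hj 1 x
  have hWopen : IsOpen (j ⁻¹' U) := hUopen.preimage hopen.continuous
  have h1W : (1 : X → A) ∈ j ⁻¹' U := by
    simp only [Set.mem_preimage, hj1]; exact hU1
  obtain ⟨I, u, hu, hI⟩ := isOpen_pi_iff.mp hWopen 1 h1W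
  -- Step 3: any `δ ∈ Γ` vanishing on `I` is trivial
  have key : ∀ δ : S, δ ∈ Γ → (∀ x ∈ I, (δ : X → B) x = 1) → δ = 1 := by
    intro δ hδΓ hδI
    by_contra hδ1
    -- δ has finite order
    have hfin : IsOfFinOrder δ :=
      isOfFinOrder_iff_pow_eq_one.mpr ⟨Nat.card B, Nat.card_pos, by
        apply Subtype.ext; funext x
        simp only [SubgroupClass.coe_pow, Pi.pow_apply, OneMemClass.coe_one, Pi.one_apply]
        exact pow_card_eq_one'⟩
    set m := orderOf δ with hm
    have hm0 : m ≠ 0 := hfin.orderOf_pos.ne'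
    have hm1 : m ≠ 1 := fun h => hδ1 (orderOf_eq_one_iff.mp h)
    set p := m.minFac with hp
    have hpprime : p.Prime := Nat.minFac_prime hm1
    have hpdvd : p ∣ m := Nat.minFac_dvd m
    set ε := δ ^ (m / p) with hε
    have hεp : ε ^ p = 1 := by
      rw [hε, ← pow_mul, Nat.div_mul_cancel hpdvd, hm]
      exact pow_orderOf_eq_one δ
    have hεne : ε ≠ 1 := by
      intro h
      have hdvd : m ∣ m / p := orderOf_dvd_of_pow_eq_one (by rw [← hε, h])
      have hlt : m / p < m := Nat.div_lt_self (Nat.pos_of_ne_zero hm0) hpprime.one_lt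
      have hpos : 0 < m / p := Nat.div_pos (Nat.le_of_dvd (Nat.pos_of_ne_zero hm0) hpdvd)
        hpprime.pos
      exact absurd (Nat.le_of_dvd hpos hdvd) (by omega)
    -- every coordinate of ε lies in A
    have hεA : ∀ x : X, (ε : X → B) x ∈ A := by
      intro x
      set b := (ε : X → B) x with hb
      have hbp : b ^ p = 1 := by
        have := congrFun (congrArg (Subtype.val) hεp) x
        simpa [hb] using this
      by_cases hbne : b = 1
      · rw [hbne]; exact one_mem A
      · obtain ⟨k, hk1, hk2, hk3⟩ := hpow b hbne
        have hordb : orderOf b = p := by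
          have hdvd : orderOf b ∣ p := orderOf_dvd_of_pow_eq_one hbp
          rcases (Nat.Prime.eq_one_or_self_of_dvd hpprime _ hdvd) with h | h
          · exact absurd (orderOf_eq_one_iff.mp h) hbne
          · exact h
        have hndvd : ¬ p ∣ k := by
          intro hdvd
          obtain ⟨c, rfl⟩ := hdvd
          exact hk2 (by rw [pow_mul, hbp, one_pow])
        have hcop : k.Coprime (orderOf b) := by
          rw [hordb, Nat.coprime_comm]
          exact (Nat.Prime.coprime_iff_not_dvd hpprime).mpr hndvd
        obtain ⟨c, hc⟩ := exists_pow_eq_self_of_coprime hcop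
        rw [← hc]
        exact pow_mem hk3 c
    -- ε is in the image of `j` of a function vanishing on I, hence in U, hence trivial
    set f : X → A := fun x => ⟨(ε : X → B) x, hεA x⟩ with hf
    have hfI : f ∈ (I : Set X).pi u := by
      intro x hx
      have hεx : (ε : X → B) x = 1 := by
        have := hδI x hx
        calc (ε : X → B) x = ((δ : X → B) x) ^ (m / p) := by
              rw [hε]; simp [SubgroupClass.coe_pow]
          _ = 1 := by rw [this, one_pow]
      have hfx : f x = 1 := Subtype.ext (by simpa [hf] using hεx)
      rw [hfx]
      exact (hu x hx).2
    have hjf : j f = ε := by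
      apply Subtype.ext; funext x
      rw [hj f x]
    have : j f ∈ U := hI hfI
    rw [hjf] at this
    exact hεne (hUΓ ε (pow_mem hδΓ _) this)
  -- Step 4: restriction to I is injective on Γ, hence Γ is finite
  have : Finite ((Γ : Set S)) := by
    apply Finite.of_injective (fun γ : (Γ : Set S) => (fun x : I => ((γ : S) : X → B) x))
    intro γ₁ γ₂ hEq
    have hδ : ((γ₁ : S))⁻¹ * (γ₂ : S) = 1 := by
      apply key _ (mul_mem (inv_mem γ₁.2) γ₂.2)
      intro x hx
      have hx' := congrFun hEq ⟨x, hx⟩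
      simp only at hx'
      show (((γ₁ : S))⁻¹ * (γ₂ : S) : S).val x = 1
      rw [Subgroup.coe_mul]
      simp only [Pi.mul_apply]
      rw [show (((γ₁:S))⁻¹ : S).val x = (((γ₁:S) : X → B) x)⁻¹ by
        simp [Subgroup.coe_inv]]
      rw [hx']
      exact inv_mul_cancel _
    exact Subtype.ext (inv_injective (mul_eq_one_iff_eq_inv.mp hδ) :)
  exact Set.toFinite _
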